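/- Let G = (V,E) be a finite loopless directed graph such that (u,v) ∈ E implies (v,u) ∈ E, let 𝒜(G) be the associated Boolean matrix indexed by V ∪ E, and let k be a natural number. Then G has an independent set of cardinality at least k if and only if the determinantal rank of 𝒜(G) is at least k + |E|, and this holds if and only if the fooling set number of 𝒜(G) is at least k + |E|. -/

import Mathlib

/-- Entries of a Boolean matrix `A` at the positions in `S` form a fooling set:
`A p.1 q.2 = A q.1 p.2 = 1` holds exactly when the positions coincide. -/
def IsFoolingSet {α β : Type*} (A : Matrix α β Bool) (S : Finset (α × β)) : Prop :=
  ∀ p ∈ S, ∀ q ∈ S, (A p.1 q.2 = true ∧ A q.1 p.2 = true) ↔ p = q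

/-- The fooling set number of a Boolean matrix: the largest cardinality of a fooling set. -/
noncomputable def foolingSetNumber {α β : Type*} (A : Matrix α β Bool) : ℕ :=
  sSup {n | ∃ S : Finset (α × β), IsFoolingSet A S ∧ S.card = n}

/-- A square Boolean matrix is sign-nonsingular if some permutation `τ` picks out all-one
entries, and every permutation doing so has the same sign as `τ`. -/
def SignNonsingular {ι : Type*} [Fintype ι] [DecidableEq ι] (A : Matrix ι ι Bool) : Prop :=
  ∃ τ : Equiv.Perm ι, (∀ i, A i (τ i) = true) ∧
    ∀ σ : Equiv.Perm ι, (∀ i, A i (σ i) = true) → Equiv.Perm.sign σ = Equiv.Perm.sign τ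

/-- The determinantal rank of a Boolean matrix: the size of its largest
sign-nonsingular square submatrix. -/
noncomputable def detRank {α β : Type*} (A : Matrix α β Bool) : ℕ :=
  sSup {k | ∃ r : Fin k → α, ∃ c : Fin k → β,
    Function.Injective r ∧ Function.Injective c ∧ SignNonsingular (A.submatrix r c)}
/-- The Boolean matrix `𝒜(G)` of a symmetric loopless directed graph `G = (V, E)`,
with rows and columns indexed by `V ⊕ E`. -/
def adjMat {V : Type*} [DecidableEq V] (E : Finset (V × V)) :
    Matrix (V ⊕ {e : V × V // e ∈ E}) (V ⊕ {e : V × V // e ∈ E}) Bool :=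
  fun x y =>
    match x, y with
    | Sum.inl u, Sum.inl v => decide (u = v ∨ (u, v) ∈ E)
    | Sum.inl u, Sum.inr e => decide (e.val.1 = u)
    | Sum.inr e, Sum.inl v => decide (e.val.2 = v)
    | Sum.inr e, Sum.inr f => decide (e = f)

section Aux

variable {V : Type*} [Fintype V] [DecidableEq V]

private lemma nat_le_sSup {S : Set ℕ} (hne : S.Nonempty) (hbdd : BddAbove S) (m : ℕ) :
    m ≤ sSup S ↔ ∃ n ∈ S, m ≤ n := by
  constructor
  · intro h; exact ⟨sSup S, Nat.sSup_mem hne hbdd, h⟩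
  · rintro ⟨n, hn, hm⟩; exact hm.trans (le_csSup hbdd hn)

/-- Step 1: an independent set yields a sign-nonsingular submatrix witness. -/
private lemma detRank_witness_of_indep (E : Finset (V × V)) (U : Finset V)
    (hU : ∀ u ∈ U, ∀ v ∈ U, (u, v) ∉ E) :
    ∃ r c : Fin (U.card + E.card) → (V ⊕ {e : V × V // e ∈ E}),
      Function.Injective r ∧ Function.Injective c ∧
      SignNonsingular ((adjMat E).submatrix r c) := by
  classical
  let eqv : Fin (U.card + E.card) ≃ (↥U ⊕ {e : V × V // e ∈ E}) :=
    finSumFinEquiv.symm.trans (Equiv.sumCongr U.equivFin.symm E.equivFin.symm)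
  let emb : (↥U ⊕ {e : V × V // e ∈ E}) → V ⊕ {e : V × V // e ∈ E} :=
    Sum.map Subtype.val id
  have hemb : Function.Injective emb :=
    Function.Injective.sumMap Subtype.val_injective fun a b h => h
  have hdiag : ∀ x, adjMat E (emb x) (emb x) = true := by
    rintro (u | e) <;> simp [emb, adjMat]
  have key : ∀ σ : Equiv.Perm (↥U ⊕ {e : V × V // e ∈ E}),
      (∀ x, adjMat E (emb x) (emb (σ x)) = true) → σ = 1 := by
    intro σ hσ
    have hE : ∀ e : {e : V × V // e ∈ E}, σ (Sum.inr e) = Sum.inr e := by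
      intro e
      rcases hs : σ (Sum.inr e) with v | f
      · exfalso
        obtain ⟨v, hv⟩ := v
        have h2 : (e : V × V).2 = v := by
          have h := hσ (Sum.inr e); rw [hs] at h
          simpa [emb, adjMat] using h
        rcases hz : σ.symm (Sum.inr e) with u | f
        · obtain ⟨u, hu⟩ := u
          have h1 : (e : V × V).1 = u := by
            have h := hσ (σ.symm (Sum.inr e))
            rw [Equiv.apply_symm_apply, hz] at h
            simpa [emb, adjMat] using h
          have hm : ((e : V × V).1, (e : V × V).2) ∈ E := e.2
          rw [h1, h2] at hm
          exact hU u hu v hv hm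
        · have hfe : σ (Sum.inr f) = Sum.inr e := by
            rw [← hz, Equiv.apply_symm_apply]
          have h : f = e := by
            have h3 := hσ (Sum.inr f); rw [hfe] at h3
            simpa [emb, adjMat] using h3
          rw [h] at hfe
          rw [hfe] at hs
          exact absurd hs (by simp)
      · have h : e = f := by
          have h := hσ (Sum.inr e); rw [hs] at h
          simpa [emb, adjMat] using h
        rw [h]
    have hV : ∀ u : ↥U, σ (Sum.inl u) = Sum.inl u := by
      intro u
      rcases hs : σ (Sum.inl u) with v | f
      · have h := hσ (Sum.inl u); rw [hs] at h
        have h' : (u : V) = (v : V) ∨ ((u : V), (v : V)) ∈ E := by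
          simpa [emb, adjMat] using h
        rcases h' with h' | h'
        · exact congrArg Sum.inl (Subtype.ext h').symm
        · exact absurd h' (hU _ u.2 _ v.2)
      · exfalso
        have h := σ.injective (hs.trans (hE f).symm)
        simp at h
    exact Equiv.ext (by rintro (u | e); exacts [hV u, hE e])
  refine ⟨emb ∘ eqv, emb ∘ eqv, hemb.comp eqv.injective, hemb.comp eqv.injective, 1, ?_, ?_⟩
  · intro i
    simpa using hdiag (eqv i)
  · intro σ hσ
    have hσ' : eqv.permCongr σ = eqv.permCongr 1 := by
      rw [key (eqv.permCongr σ) ?_]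
      · ext x; simp [Equiv.permCongr_apply]
      · intro x
        have h := hσ (eqv.symm x)
        simpa [Matrix.submatrix_apply, Equiv.permCongr_apply] using h
    rw [(Equiv.permCongr eqv).injective hσ']

/-- Step 2: a sign-nonsingular submatrix witness yields a fooling set. -/
private lemma fooling_witness_of_detRank (E : Finset (V × V)) (n : ℕ)
    (r c : Fin n → (V ⊕ {e : V × V // e ∈ E}))
    (hr : Function.Injective r)
    (hsn : SignNonsingular ((adjMat E).submatrix r c)) :
    ∃ S, IsFoolingSet (adjMat E) S ∧ S.card = n := by
  classical
  obtain ⟨τ, hτ, huniq⟩ := hsn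
  have hfinj : Function.Injective fun i => (r i, c (τ i)) := by
    intro a b h
    exact hr (congrArg Prod.fst h)
  refine ⟨Finset.image (fun i => (r i, c (τ i))) Finset.univ, ?_, ?_⟩
  · rintro p hp q hq
    simp only [Finset.mem_image, Finset.mem_univ, true_and] at hp hq
    obtain ⟨i, rfl⟩ := hp; obtain ⟨j, rfl⟩ := hq
    constructor
    · rintro ⟨h1, h2⟩
      rcases eq_or_ne i j with rfl | hij
      · rfl
      exfalso
      set σ := τ * Equiv.swap i j with hσdef
      have hall : ∀ l, ((adjMat E).submatrix r c) l (σ l) = true := by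
        intro l
        simp only [hσdef, Equiv.Perm.mul_apply]
        rcases eq_or_ne l i with rfl | hli
        · rw [Equiv.swap_apply_left]; exact h1
        rcases eq_or_ne l j with rfl | hlj
        · rw [Equiv.swap_apply_right]; exact h2
        · rw [Equiv.swap_apply_of_ne_of_ne hli hlj]; exact hτ l
      have hs := huniq σ hall
      rw [hσdef, Equiv.Perm.sign_mul, Equiv.Perm.sign_swap hij] at hs
      have hs' : Equiv.Perm.sign τ * (-1) = Equiv.Perm.sign τ * 1 := by
        rw [mul_one]; exact hs
      have := mul_left_cancel hs'
      exact absurd this (by decide)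
    · rintro h
      have : i = j := hfinj h
      subst this
      exact ⟨hτ i, hτ i⟩
  · rw [Finset.card_image_of_injective _ hfinj, Finset.card_univ, Fintype.card_fin]

/-- Step 3: a fooling set yields an independent set of size `|S| - |E|`. -/
private lemma indep_of_fooling (E : Finset (V × V)) (hloop : ∀ p ∈ E, p.1 ≠ p.2)
    (hsymm : ∀ u v : V, (u, v) ∈ E → (v, u) ∈ E)
    (S : Finset ((V ⊕ {e : V × V // e ∈ E}) × (V ⊕ {e : V × V // e ∈ E})))
    (hS : IsFoolingSet (adjMat E) S) :
    ∃ U : Finset V, (∀ u ∈ U, ∀ v ∈ U, (u, v) ∉ E) ∧ S.card ≤ U.card + E.card := by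
  classical
  have hdiag : ∀ p ∈ S, adjMat E p.1 p.2 = true := by
    intro p hp
    exact (((hS p hp p hp).mpr rfl).1)
  let f : (V ⊕ {e : V × V // e ∈ E}) × (V ⊕ {e : V × V // e ∈ E}) →
      V ⊕ {e : V × V // e ∈ E} := fun p =>
    match p with
    | (Sum.inl u, Sum.inl v) => if h : (u, v) ∈ E then Sum.inr ⟨(u, v), h⟩ else Sum.inl u
    | (Sum.inl _, Sum.inr e) => Sum.inr e
    | (Sum.inr e, _) => Sum.inr e
  have hvert : ∀ p ∈ S, ∀ u : V, f p = Sum.inl u → p = (Sum.inl u, Sum.inl u) := by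
    rintro ⟨(a | a), (b | b)⟩ hp u hf <;> simp only [f] at hf
    · split_ifs at hf with h
      have hd := hdiag _ hp
      simp only [adjMat, decide_eq_true_eq] at hd
      rcases hd with hd | hd
      · obtain rfl : a = u := by simpa using hf
        subst hd; rfl
      · exact absurd hd h
    · simp at hf
    · simp at hf
    · simp at hf
  have hcanon : ∀ p ∈ S, ∀ e : {e : V × V // e ∈ E}, f p = Sum.inr e →
      (p.1 = Sum.inl (e : V × V).1 ∨ p.1 = Sum.inr e) ∧
      (p.2 = Sum.inl (e : V × V).2 ∨ p.2 = Sum.inr e) := by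
    rintro ⟨(a | a), (b | b)⟩ hp e hf <;> simp only [f] at hf
    · split_ifs at hf with h
      obtain rfl : (⟨(a, b), h⟩ : {e : V × V // e ∈ E}) = e := by simpa using hf
      exact ⟨Or.inl rfl, Or.inl rfl⟩
    · obtain rfl : b = e := by simpa using hf
      have hd := hdiag _ hp
      simp only [adjMat, decide_eq_true_eq] at hd
      exact ⟨Or.inl (by rw [hd]), Or.inr rfl⟩
    · obtain rfl : a = e := by simpa using hf
      have hd := hdiag _ hp
      simp only [adjMat, decide_eq_true_eq] at hd
      exact ⟨Or.inr rfl, Or.inl (by rw [hd])⟩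
    · obtain rfl : a = e := by simpa using hf
      have hd := hdiag _ hp
      simp only [adjMat, decide_eq_true_eq] at hd
      exact ⟨Or.inr rfl, Or.inr (by rw [hd])⟩
  have hinj : ∀ p ∈ S, ∀ q ∈ S, f p = f q → p = q := by
    intro p hp q hq hfq
    rcases he : f p with u | e
    · rw [hvert p hp u he, hvert q hq u (hfq ▸ he)]
    · have hP := hcanon p hp e he
      have hQ := hcanon q hq e (hfq ▸ he)
      apply (hS p hp q hq).mp
      constructor
      · rcases hP.1 with h1 | h1 <;> rcases hQ.2 with h2 | h2 <;> rw [h1, h2] <;>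
          simp only [adjMat, decide_eq_true_eq]
        · exact Or.inr e.2
      · rcases hQ.1 with h1 | h1 <;> rcases hP.2 with h2 | h2 <;> rw [h1, h2] <;>
          simp only [adjMat, decide_eq_true_eq]
        · exact Or.inr e.2
  let W := S.image f
  have hWcard : W.card = S.card :=
    Finset.card_image_iff.mpr fun p hp q hq h => hinj p (by simpa using hp) q (by simpa using hq) h
  refine ⟨W.toLeft, ?_, ?_⟩
  · intro u hu v hv huv
    rw [Finset.mem_toLeft, Finset.mem_image] at hu hv
    obtain ⟨p, hp, hfp⟩ := hu
    obtain ⟨q, hq, hfq⟩ := hv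
    have hpu := hvert p hp u hfp
    have hqv := hvert q hq v hfq
    have hpq : p = q := by
      apply (hS p hp q hq).mp
      rw [hpu, hqv]
      constructor
      · simp only [adjMat, decide_eq_true_eq]
        exact Or.inr huv
      · simp only [adjMat, decide_eq_true_eq]
        exact Or.inr (hsymm u v huv)
    rw [hpu, hqv] at hpq
    obtain rfl : u = v := by simpa [Prod.ext_iff] using hpq
    exact hloop (u, u) huv rfl
  · calc S.card = W.card := hWcard.symm
      _ = W.toLeft.card + W.toRight.card := Finset.card_toLeft_add_card_toRight.symm
      _ ≤ W.toLeft.card + E.card := by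
          have : W.toRight.card ≤ Fintype.card {e : V × V // e ∈ E} :=
            Finset.card_le_univ _
          rw [Fintype.card_coe] at this
          omega

end Aux

/-- `G` has an independent set of cardinality at least `k` iff the determinantal rank of
`𝒜(G)` is at least `k + |E|`, iff the fooling set number of `𝒜(G)` is at least `k + |E|`. -/
theorem indepSet_iff_detRank_iff_foolingSetNumber {V : Type*} [Fintype V] [DecidableEq V]
    (E : Finset (V × V)) (hloop : ∀ p ∈ E, p.1 ≠ p.2)
    (hsymm : ∀ u v : V, (u, v) ∈ E → (v, u) ∈ E) (k : ℕ) :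
    ((∃ U : Finset V, (∀ u ∈ U, ∀ v ∈ U, (u, v) ∉ E) ∧ k ≤ U.card) ↔
        k + E.card ≤ detRank (adjMat E)) ∧
      (k + E.card ≤ detRank (adjMat E) ↔ k + E.card ≤ foolingSetNumber (adjMat E)) := by

  classical
  set DS := {k | ∃ r : Fin k → (V ⊕ {e : V × V // e ∈ E}),
      ∃ c : Fin k → (V ⊕ {e : V × V // e ∈ E}),
      Function.Injective r ∧ Function.Injective c ∧
      SignNonsingular ((adjMat E).submatrix r c)} with hDS
  set FS := {n | ∃ S : Finset ((V ⊕ {e : V × V // e ∈ E}) × (V ⊕ {e : V × V // e ∈ E})),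
      IsFoolingSet (adjMat E) S ∧ S.card = n} with hFS
  have hdet : detRank (adjMat E) = sSup DS := rfl
  have hfool : foolingSetNumber (adjMat E) = sSup FS := rfl
  have hDSne : DS.Nonempty := by
    refine ⟨0, Fin.elim0, Fin.elim0, fun i => i.elim0, fun i => i.elim0, 1, fun i => i.elim0, ?_⟩
    intro σ _
    rw [show σ = 1 from Equiv.ext fun i => i.elim0]
  have hDSbdd : BddAbove DS := by
    refine ⟨Fintype.card (V ⊕ {e : V × V // e ∈ E}), ?_⟩
    rintro n ⟨r, c, hr, -, -⟩
    have := Fintype.card_le_of_injective r hr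
    simpa using this
  have hFSne : FS.Nonempty :=
    ⟨0, ∅, fun p hp => absurd hp (Finset.notMem_empty p), rfl⟩
  have hFSbdd : BddAbove FS := by
    refine ⟨Fintype.card ((V ⊕ {e : V × V // e ∈ E}) × (V ⊕ {e : V × V // e ∈ E})), ?_⟩
    rintro n ⟨S, -, rfl⟩
    exact (Finset.card_le_univ S).trans_eq (Finset.card_univ)
  have h1 : (∃ U : Finset V, (∀ u ∈ U, ∀ v ∈ U, (u, v) ∉ E) ∧ k ≤ U.card) →
      k + E.card ≤ detRank (adjMat E) := by
    rintro ⟨U, hU, hk⟩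
    obtain ⟨r, c, hr, hc, hsn⟩ := detRank_witness_of_indep E U hU
    rw [hdet, nat_le_sSup hDSne hDSbdd]
    exact ⟨U.card + E.card, ⟨r, c, hr, hc, hsn⟩, by omega⟩
  have h2 : k + E.card ≤ detRank (adjMat E) → k + E.card ≤ foolingSetNumber (adjMat E) := by
    intro h
    rw [hdet, nat_le_sSup hDSne hDSbdd] at h
    obtain ⟨n, ⟨r, c, hr, hc, hsn⟩, hn⟩ := h
    obtain ⟨S, hSfool, hScard⟩ := fooling_witness_of_detRank E n r c hr hsn
    rw [hfool, nat_le_sSup hFSne hFSbdd]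
    exact ⟨n, ⟨S, hSfool, hScard⟩, hn⟩
  have h3 : k + E.card ≤ foolingSetNumber (adjMat E) →
      ∃ U : Finset V, (∀ u ∈ U, ∀ v ∈ U, (u, v) ∉ E) ∧ k ≤ U.card := by
    intro h
    rw [hfool, nat_le_sSup hFSne hFSbdd] at h
    obtain ⟨n, ⟨S, hSfool, rfl⟩, hn⟩ := h
    obtain ⟨U, hU, hcard⟩ := indep_of_fooling E hloop hsymm S hSfool
    exact ⟨U, hU, by omega⟩
  exact ⟨⟨h1, fun h => h3 (h2 h)⟩, ⟨h2, fun h => h1 (h3 h)⟩⟩
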